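/- arXiv:1703.06405 — 2 statements merged into one kernel-verified Lean document; each statement's English description precedes it below -/
import Mathlib

section
/- Let 0 < q < 1 and φ ∈ ℝ. On ℓ²(ℤ≥0), the operators z₁₁ = q^{-1} C₄ S, z₂₁ = 0, z₂₂ = e^{iφ}·I satisfy all nine defining relations of Pol(Mat₂^sym)_q, giving the representation ν_φ. -/
noncomputable section
open ContinuousLinearMap Complex

/-- ℓ²(ℤ≥0) -/
abbrev H : Type := lp (fun _ : ℕ => ℂ) 2

/-- standard orthonormal basis vector e_k -/
def e (k : ℕ) : H := lp.single 2 k 1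

lemma coord (f : H) (j : ℕ) : (inner ℂ (e j) f : ℂ) = f j := by
  simpa [e] using lp.inner_single_left (𝕜 := ℂ) j (1 : ℂ) f

lemma dense_span_e : Dense ((Submodule.span ℂ (Set.range e) : Submodule ℂ H) : Set H) := by
  rw [Submodule.dense_iff_topologicalClosure_eq_top, Submodule.topologicalClosure_eq_top_iff,
    Submodule.eq_bot_iff]
  intro x hx
  apply lp.ext
  funext j
  have h := (Submodule.mem_orthogonal _ x).mp hx (e j) (Submodule.subset_span ⟨j, rfl⟩)
  rw [coord] at h
  simpa using h

lemma ext_op {T T' : H →L[ℂ] H} (h : ∀ k, T (e k) = T' (e k)) : T = T' :=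
  ContinuousLinearMap.ext_on dense_span_e (by rintro x ⟨k, rfl⟩; exact h k)

lemma vec_ext {v w : H} (h : ∀ j, (inner ℂ (e j) v : ℂ) = inner ℂ (e j) w) : v = w := by
  apply lp.ext; funext j
  rw [← coord, ← coord]; exact h j

lemma e_apply_self (k : ℕ) : (e k : ∀ _ : ℕ, ℂ) k = 1 := lp.single_apply_self 2 k 1

lemma e_apply_ne (k : ℕ) {j : ℕ} (h : j ≠ k) : (e k : ∀ _ : ℕ, ℂ) j = 0 :=
  lp.single_apply_ne 2 k 1 h

set_option maxHeartbeats 1000000 in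
theorem stmt6 (q : ℝ) (hq : 0 < q) (hq1 : q < 1) (φ : ℝ)
    (S C4 : H →L[ℂ] H)
    (hS : ∀ k, S (e k) = e (k + 1))
    (hC4 : ∀ k, C4 (e k) = ((Real.sqrt (1 - q ^ (4 * k)) : ℝ) : ℂ) • e k)
    (z11 z21 z22 : H →L[ℂ] H)
    (hz11 : z11 = (q⁻¹ : ℂ) • (C4 * S))
    (hz21 : z21 = 0)
    (hz22 : z22 = Complex.exp (φ * Complex.I) • (1 : H →L[ℂ] H)) :
    z11 * z21 = ((q : ℂ) ^ 2) • (z21 * z11)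
    ∧ z21 * z22 = ((q : ℂ) ^ 2) • (z22 * z21)
    ∧ z11 * z22 - z22 * z11 = ((q : ℂ) * ((q : ℂ) ^ 2 - (q : ℂ)⁻¹ ^ 2)) • z21 ^ 2
    ∧ adjoint z11 * z11
        = ((q : ℂ) ^ 4) • (z11 * adjoint z11)
          - ((q : ℂ) * ((q : ℂ)⁻¹ - (q : ℂ)) * (1 + (q : ℂ) ^ 2) ^ 2)
              • (z21 * adjoint z21)
          + (((q : ℂ)⁻¹ - (q : ℂ)) ^ 2 * (1 + (q : ℂ) ^ 2)) • (z22 * adjoint z22)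
          + ((1 : ℂ) - (q : ℂ) ^ 4) • (1 : H →L[ℂ] H)
    ∧ adjoint z11 * z21
        = ((q : ℂ) ^ 2) • (z21 * adjoint z11)
          - ((q : ℂ) * ((q : ℂ)⁻¹ - (q : ℂ)) * ((q : ℂ)⁻¹ + (q : ℂ)))
              • (z22 * adjoint z21)
    ∧ adjoint z11 * z22 = z22 * adjoint z11
    ∧ adjoint z21 * z21
        = ((q : ℂ) ^ 2) • (z21 * adjoint z21)
          - ((1 : ℂ) - (q : ℂ) ^ 2) • (z22 * adjoint z22)
          + ((1 : ℂ) - (q : ℂ) ^ 2) • (1 : H →L[ℂ] H)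
    ∧ adjoint z21 * z22 = ((q : ℂ) ^ 2) • (z22 * adjoint z21)
    ∧ adjoint z22 * z22
        = ((q : ℂ) ^ 4) • (z22 * adjoint z22)
          + ((1 : ℂ) - (q : ℂ) ^ 4) • (1 : H →L[ℂ] H) := by
  have hq0 : (q : ℂ) ≠ 0 := by exact_mod_cast hq.ne'
  set c : ℂ := Complex.exp (↑φ * Complex.I) with hc
  have hcc : c * (starRingEnd ℂ) c = 1 := by
    rw [hc, ← Complex.exp_conj, ← Complex.exp_add]
    have h0 : (↑φ * Complex.I) + (starRingEnd ℂ) (↑φ * Complex.I) = 0 := by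
      simp [map_mul, Complex.conj_I, Complex.conj_ofReal]
    rw [h0, Complex.exp_zero]
  have hadj22 : adjoint z22 = (starRingEnd ℂ) c • (1 : H →L[ℂ] H) := by
    rw [hz22]
    rw [map_smulₛₗ (ContinuousLinearMap.adjoint (𝕜 := ℂ) (E := H) (F := H)) c 1]
    congr 1
    rw [ContinuousLinearMap.one_def, adjoint_id]
  have h2222 : z22 * adjoint z22 = 1 := by
    rw [hadj22, hz22, smul_mul_smul_comm, one_mul, hcc, one_smul]
  have hadj21 : adjoint z21 = 0 := by rw [hz21, map_zero]
  -- nonnegativity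
  have hnn : ∀ n : ℕ, (0 : ℝ) ≤ 1 - q ^ n := fun n => by
    have : q ^ n ≤ 1 := pow_le_one₀ hq.le hq1.le
    linarith
  have hsq : ∀ n : ℕ, Real.sqrt (1 - q ^ n) * Real.sqrt (1 - q ^ n) = 1 - q ^ n :=
    fun n => Real.mul_self_sqrt (hnn n)
  -- action of z11 on basis
  have hz11e : ∀ k, z11 (e k)
      = (((q⁻¹ * Real.sqrt (1 - q ^ (4 * (k + 1))) : ℝ)) : ℂ) • e (k + 1) := by
    intro k
    rw [hz11]
    simp only [smul_apply, ContinuousLinearMap.mul_apply, hS, hC4]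
    rw [smul_smul]
    congr 1
    push_cast
    ring
  -- adjoint of z11 on basis
  have hA : ∀ m j, ((adjoint z11 (e m) : H) : ∀ _ : ℕ, ℂ) j
      = (((q⁻¹ * Real.sqrt (1 - q ^ (4 * (j + 1))) : ℝ)) : ℂ)
          * ((e m : ∀ _ : ℕ, ℂ) (j + 1)) := by
    intro m j
    rw [← coord, adjoint_inner_right, hz11e j, inner_smul_left, coord, Complex.conj_ofReal]
  have hA0 : adjoint z11 (e 0) = 0 := by
    apply lp.ext; funext j
    rw [hA 0 j, e_apply_ne 0 (Nat.succ_ne_zero j)]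
    simp
  have hAs : ∀ k, adjoint z11 (e (k + 1))
      = (((q⁻¹ * Real.sqrt (1 - q ^ (4 * (k + 1))) : ℝ)) : ℂ) • e k := by
    intro k
    apply lp.ext; funext j
    rw [hA (k + 1) j]
    rw [lp.coeFn_smul, Pi.smul_apply, smul_eq_mul]
    by_cases h : j = k
    · subst h
      rw [e_apply_self, e_apply_self]
    · rw [e_apply_ne k h, e_apply_ne (k + 1) (fun hh => h (Nat.succ_injective hh))]
      simp
  -- products on basis
  have h11A : ∀ k, (z11 * adjoint z11) (e k)
      = (((q⁻¹ * q⁻¹ * (1 - q ^ (4 * k)) : ℝ)) : ℂ) • e k := by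
    intro k
    rw [ContinuousLinearMap.mul_apply]
    cases k with
    | zero =>
      rw [hA0, map_zero]
      norm_num
    | succ k =>
      rw [hAs k, map_smul, hz11e k, smul_smul]
      congr 1
      have hre : (q⁻¹ * Real.sqrt (1 - q ^ (4 * (k + 1)))) * (q⁻¹ * Real.sqrt (1 - q ^ (4 * (k + 1))))
          = q⁻¹ * q⁻¹ * (1 - q ^ (4 * (k + 1))) := by
        linear_combination (q⁻¹ * q⁻¹) * hsq (4 * (k + 1))
      exact_mod_cast congrArg (Complex.ofReal) hre
  have hA11 : ∀ k, (adjoint z11 * z11) (e k)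
      = (((q⁻¹ * q⁻¹ * (1 - q ^ (4 * (k + 1))) : ℝ)) : ℂ) • e k := by
    intro k
    rw [ContinuousLinearMap.mul_apply, hz11e k, map_smul, hAs k, smul_smul]
    congr 1
    have hre : (q⁻¹ * Real.sqrt (1 - q ^ (4 * (k + 1)))) * (q⁻¹ * Real.sqrt (1 - q ^ (4 * (k + 1))))
        = q⁻¹ * q⁻¹ * (1 - q ^ (4 * (k + 1))) := by
      linear_combination (q⁻¹ * q⁻¹) * hsq (4 * (k + 1))
    exact_mod_cast congrArg (Complex.ofReal) hre
  refine ⟨?_, ?_, ?_, ?_, ?_, ?_, ?_, ?_, ?_⟩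
  · simp [hz21]
  · simp [hz21]
  · rw [hz21, hz22]
    simp [mul_smul_comm, smul_mul_assoc]
  · -- main relation
    rw [hz21, h2222]
    apply ext_op
    intro k
    simp only [add_apply, sub_apply, smul_apply, ContinuousLinearMap.one_apply, mul_zero, zero_mul,
      ContinuousLinearMap.zero_apply, map_zero, smul_zero, sub_zero,
      ContinuousLinearMap.mul_apply]
    rw [show (adjoint z11) (z11 (e k)) = (adjoint z11 * z11) (e k) from rfl,
        show z11 ((adjoint z11) (e k)) = (z11 * adjoint z11) (e k) from rfl,
        hA11 k, h11A k, smul_smul, ← add_smul, ← add_smul]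
    congr 1
    push_cast
    rw [show (4 * (k + 1)) = 4 * k + 4 from by ring, pow_add]
    field_simp
    ring
  · rw [hz21]
    simp
  · rw [hz22]
    simp [mul_smul_comm, smul_mul_assoc]
  · rw [hz21, h2222, map_zero]
    simp
  · rw [hz21, map_zero]
    simp
  · rw [h2222, hadj22, hz22, smul_mul_smul_comm, one_mul, mul_comm, hcc, one_smul, ← add_smul]
    norm_num
end
end

section
/- Let 0 < q < 1 and φ ∈ ℝ. In Pol(ℂ)_q (relation z*z = q⁴zz* + 1 − q⁴), the Fock representation ρ_F(z) = C₄S on ℓ²(ℤ≥0) dominates in norm the one-dimensional representations: for every *-polynomial p in z, |ρ_φ(p)| ≤ ‖ρ_F(p)‖, where ρ_φ(z) = e^{iφ}. -/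
noncomputable section
open scoped InnerProductSpace
open Filter Topology
open ContinuousLinearMap Complex

lemma inner_e (j k : ℕ) : ⟪e j, e k⟫_ℂ = if j = k then 1 else 0 := by
  rw [e, lp.inner_single_left]
  simp [e, lp.single_apply, RCLike.inner_apply, eq_comm, Pi.single_apply]

lemma coord_eq_inner (x : H) (j : ℕ) : x j = ⟪e j, x⟫_ℂ := by
  rw [e, lp.inner_single_left]
  simp [RCLike.inner_apply]

lemma norm_e (k : ℕ) : ‖e k‖ = 1 := by
  have : (‖e k‖ : ℝ) ^ 2 = 1 := by
    rw [← inner_self_eq_norm_sq (𝕜 := ℂ)]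
    · rw [inner_e]; simp
  nlinarith [norm_nonneg (e k)]

section adj
variable {q : ℝ} {S C4 : H →L[ℂ] H}
  (hS : ∀ k, S (e k) = e (k + 1))
  (hC4 : ∀ k, C4 (e k) = ((Real.sqrt (1 - q ^ (4 * k)) : ℝ) : ℂ) • e k)

include hS hC4

lemma CS_e (k : ℕ) : (C4 ∘L S) (e k)
    = ((Real.sqrt (1 - q ^ (4 * (k+1))) : ℝ) : ℂ) • e (k+1) := by
  simp [hS, hC4]

lemma adj_coord (m j : ℕ) : (adjoint (C4 ∘L S) (e m)) j
    = if j + 1 = m then ((Real.sqrt (1 - q ^ (4 * m)) : ℝ) : ℂ) else 0 := by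
  rw [coord_eq_inner, adjoint_inner_right, CS_e hS hC4, inner_smul_left, inner_e]
  split_ifs with h1 h2 h2 <;> simp_all

lemma adj_e_zero : adjoint (C4 ∘L S) (e 0) = 0 := by
  apply lp.ext; funext j
  rw [adj_coord hS hC4]
  simp

lemma adj_e_succ (m : ℕ) : adjoint (C4 ∘L S) (e (m+1))
    = ((Real.sqrt (1 - q ^ (4 * (m+1))) : ℝ) : ℂ) • e m := by
  apply lp.ext; funext j
  rw [adj_coord hS hC4]
  have : ((((Real.sqrt (1 - q ^ (4 * (m+1))) : ℝ) : ℂ) • e m : H) : ∀ i : ℕ, ℂ) j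
      = ((Real.sqrt (1 - q ^ (4 * (m+1))) : ℝ) : ℂ) * (e m j) := by
    rw [lp.coeFn_smul]; rfl
  rw [this, e, lp.single_apply]
  split_ifs with h1 h2 h2 <;> simp_all

end adj

def dd : List Bool → ℤ
  | [] => 0
  | b :: w => (if b then 1 else -1) + dd w

lemma dd_abs : ∀ w : List Bool, -(w.length : ℤ) ≤ dd w ∧ dd w ≤ w.length
  | [] => by simp [dd]
  | b :: w => by
    obtain ⟨h1, h2⟩ := dd_abs w
    simp only [dd, List.length_cons]
    constructor <;> split_ifs <;> push_cast <;> omega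

section word
variable {q : ℝ} {f : Bool → (H →L[ℂ] H)}

lemma q_pow_le_one (hq : 0 ≤ q) (hq1 : q ≤ 1) (n : ℕ) : q ^ n ≤ 1 :=
  pow_le_one₀ hq hq1

lemma one_sub_mono (hq : 0 ≤ q) (hq1 : q ≤ 1) {a b : ℕ} (h : a ≤ b) :
    1 - q ^ (4*a) ≤ 1 - q ^ (4*b) := by
  have := pow_le_pow_of_le_one hq hq1 (by omega : 4*a ≤ 4*b)
  linarith

lemma one_sub_nonneg' (hq : 0 ≤ q) (hq1 : q ≤ 1) (a : ℕ) : 0 ≤ 1 - q ^ (4*a) := by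
  have := q_pow_le_one hq hq1 (4*a); linarith

lemma sqrt_ge (x : ℝ) (h0 : 0 ≤ x) (h1 : x ≤ 1) : x ≤ Real.sqrt x := by
  nlinarith [Real.sq_sqrt h0, Real.sqrt_nonneg x, Real.sqrt_le_one.2 h1]

set_option maxHeartbeats 1000000 in
lemma word_act (hq : 0 < q) (hq1 : q < 1)
    (hfT : ∀ k, f true (e k) = ((Real.sqrt (1 - q^(4*(k+1))) : ℝ) : ℂ) • e (k+1))
    (hfF0 : f false (e 0) = 0)
    (hfF : ∀ m, f false (e (m+1)) = ((Real.sqrt (1 - q^(4*(m+1))) : ℝ) : ℂ) • e m) :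
    ∀ (w : List Bool) (k m : ℕ), w.length ≤ k → (m:ℤ) = k + dd w →
    ∃ c : ℝ, (1 - q^(4*(k - w.length)))^w.length ≤ c ∧ c ≤ 1 ∧
      ((w.map f).prod) (e k) = ((c : ℝ) : ℂ) • e m := by
  intro w
  induction w with
  | nil =>
    intro k m hk hm
    refine ⟨1, by simp, le_refl 1, ?_⟩
    have : m = k := by
      simp [dd] at hm; exact_mod_cast hm
    subst this
    simp
  | cons b t ih =>
    intro k m hk hm
    simp only [List.length_cons] at hk
    obtain ⟨hd1, hd2⟩ := dd_abs t
    have htk : t.length ≤ k := by omega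
    have hpos : (0:ℤ) < k + dd t := by
      have : (t.length : ℤ) + 1 ≤ k := by exact_mod_cast hk
      omega
    set m' := (k + dd t).toNat with hm'def
    have hm' : (m' : ℤ) = k + dd t := Int.toNat_of_nonneg (le_of_lt hpos)
    clear_value m'
    obtain ⟨c, hc1, hc2, hc3⟩ := ih k m' htk hm'
    -- basic bounds
    have hq0 : (0:ℝ) ≤ q := le_of_lt hq
    have hq1' : q ≤ 1 := le_of_lt hq1
    set β : ℝ := 1 - q^(4*(k - (t.length+1))) with hβ
    have hβ0 : 0 ≤ β := one_sub_nonneg' hq0 hq1' _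
    have hβ1 : β ≤ 1 := by
      have : (0:ℝ) < q^(4*(k - (t.length+1))) := pow_pos hq _
      simp only [hβ]; linarith
    have hcA : β ^ t.length ≤ c := by
      refine le_trans ?_ hc1
      exact pow_le_pow_left₀ hβ0 (one_sub_mono hq0 hq1' (by omega)) _
    have hc0 : 0 ≤ c := le_trans (pow_nonneg hβ0 _) hcA
    have hprod : ((b :: t).map f).prod = f b * (t.map f).prod := by simp
    have happ : ((b :: t).map f).prod (e k) = f b (((c:ℝ):ℂ) • e m') := by
      rw [hprod, ContinuousLinearMap.mul_apply, hc3]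
    cases b with
    | true =>
      have hmm : m = m' + 1 := by
        have : (m:ℤ) = (m':ℤ) + 1 := by rw [hm, hm']; simp [dd]; ring
        exact_mod_cast this
      refine ⟨c * Real.sqrt (1 - q^(4*(m'+1))), ?_, ?_, ?_⟩
      · have hβB : β ≤ Real.sqrt (1 - q^(4*(m'+1))) := by
          refine le_trans ?_ (sqrt_ge _ (one_sub_nonneg' hq0 hq1' _)
            (by have := pow_pos hq (4*(m'+1)); linarith))
          refine one_sub_mono hq0 hq1' ?_
          have : (k:ℤ) - t.length ≤ (m':ℤ) + 1 := by rw [hm']; omega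
          omega
        calc (1 - q^(4*(k - (t.length+1))))^(t.length+1) = β^t.length * β := by
              rw [← hβ, pow_succ]
          _ ≤ c * Real.sqrt (1 - q^(4*(m'+1))) :=
              mul_le_mul hcA hβB hβ0 hc0
      · have h1 : Real.sqrt (1 - q^(4*(m'+1))) ≤ 1 :=
          Real.sqrt_le_one.2 (by have := pow_pos hq (4*(m'+1)); linarith)
        have h2 : 0 ≤ Real.sqrt (1 - q^(4*(m'+1))) := Real.sqrt_nonneg _
        nlinarith
      · rw [happ, map_smul, hfT, hmm, smul_smul, ← Complex.ofReal_mul]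
    | false =>
      have hm'pos : 1 ≤ m' := by
        have : (1:ℤ) ≤ (m':ℤ) := by
          rw [hm']
          have : (t.length : ℤ) + 1 ≤ k := by exact_mod_cast hk
          omega
        exact_mod_cast this
      obtain ⟨m'', rfl⟩ : ∃ m'', m' = m'' + 1 := ⟨m' - 1, by omega⟩
      have hmm : m = m'' := by
        have : (m:ℤ) = (m'':ℤ) := by
          rw [hm]
          have : ((m'':ℤ) + 1) = k + dd t := by exact_mod_cast hm'
          simp [dd]; omega
        exact_mod_cast this
      refine ⟨c * Real.sqrt (1 - q^(4*(m''+1))), ?_, ?_, ?_⟩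
      · have hβB : β ≤ Real.sqrt (1 - q^(4*(m''+1))) := by
          refine le_trans ?_ (sqrt_ge _ (one_sub_nonneg' hq0 hq1' _)
            (by have := pow_pos hq (4*(m''+1)); linarith))
          refine one_sub_mono hq0 hq1' ?_
          have : (k:ℤ) - t.length ≤ (m'':ℤ) + 1 := by
            have : ((m'':ℤ) + 1) = k + dd t := by exact_mod_cast hm'
            omega
          omega
        calc (1 - q^(4*(k - (t.length+1))))^(t.length+1) = β^t.length * β := by
              rw [← hβ, pow_succ]
          _ ≤ c * Real.sqrt (1 - q^(4*(m''+1))) :=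
              mul_le_mul hcA hβB hβ0 hc0
      · have h1 : Real.sqrt (1 - q^(4*(m''+1))) ≤ 1 :=
          Real.sqrt_le_one.2 (by have := pow_pos hq (4*(m''+1)); linarith)
        have h2 : 0 ≤ Real.sqrt (1 - q^(4*(m''+1))) := Real.sqrt_nonneg _
        nlinarith
      · rw [happ, map_smul, hfF, hmm, smul_smul, ← Complex.ofReal_mul]

end word

def ph (φ : ℝ) (k : ℕ) : ℂ := Complex.exp (((-((k:ℝ) * φ) : ℝ) : ℂ) * Complex.I)

def uu (φ : ℝ) (N : ℕ) : H := ∑ j ∈ Finset.range N, ph φ (N + j) • e (N + j)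

def vv (φ : ℝ) (N : ℕ) : H := (((Real.sqrt N)⁻¹ : ℝ) : ℂ) • uu φ N

def G (φ : ℝ) (w : List Bool) : ℂ := Complex.exp ((((dd w : ℝ) * φ : ℝ) : ℂ) * Complex.I)

lemma abs_ph (φ : ℝ) (k : ℕ) : ‖ph φ k‖ = 1 := Complex.norm_exp_ofReal_mul_I _

lemma abs_G (φ : ℝ) (w : List Bool) : ‖G φ w‖ = 1 := Complex.norm_exp_ofReal_mul_I _

lemma conj_ph_mul (φ : ℝ) (a b : ℕ) :
    (starRingEnd ℂ) (ph φ a) * ph φ b = Complex.exp (((((a:ℝ) - b) * φ : ℝ) : ℂ) * Complex.I) := by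
  rw [ph, ph, ← Complex.exp_conj, ← Complex.exp_add]
  congr 1
  simp only [map_mul, Complex.conj_ofReal, Complex.conj_I]
  push_cast
  ring

lemma inner_uu_e (φ : ℝ) (N m : ℕ) :
    ⟪uu φ N, e m⟫_ℂ = if N ≤ m ∧ m < 2*N then (starRingEnd ℂ) (ph φ m) else 0 := by
  rw [uu, sum_inner]
  simp only [inner_smul_left, inner_e]
  by_cases h : N ≤ m ∧ m < 2*N
  · rw [if_pos h]
    rw [Finset.sum_eq_single (m - N)]
    · rw [show N + (m - N) = m by omega, if_pos rfl, mul_one]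
    · intro i hi hne
      rw [if_neg (by simp at hi; omega), mul_zero]
    · intro hm; exfalso; rw [Finset.mem_range] at hm; omega
  · rw [if_neg h]
    apply Finset.sum_eq_zero
    intro i hi
    rw [if_neg (by simp at hi; omega), mul_zero]

lemma inner_uu_self (φ : ℝ) (N : ℕ) : ⟪uu φ N, uu φ N⟫_ℂ = (N : ℂ) := by
  nth_rewrite 2 [uu]
  rw [inner_sum]
  have : ∀ j ∈ Finset.range N, ⟪uu φ N, ph φ (N+j) • e (N+j)⟫_ℂ = 1 := by
    intro j hj
    simp at hj
    rw [inner_smul_right, inner_uu_e, if_pos (by omega)]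
    rw [mul_comm, ← Complex.normSq_eq_conj_mul_self]
    rw [← Complex.sq_norm, abs_ph]
    norm_num
  rw [Finset.sum_congr rfl this]
  simp

lemma norm_vv (φ : ℝ) (N : ℕ) (hN : 1 ≤ N) : ‖vv φ N‖ = 1 := by
  have hNpos : (0:ℝ) < N := by exact_mod_cast hN
  have hsq : ⟪vv φ N, vv φ N⟫_ℂ = 1 := by
    rw [vv, inner_smul_left, inner_smul_right, inner_uu_self, Complex.conj_ofReal]
    rw [← Complex.ofReal_natCast, ← Complex.ofReal_mul, ← Complex.ofReal_mul]
    norm_cast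
    rw [← mul_assoc, ← mul_inv, Real.mul_self_sqrt (le_of_lt hNpos)]
    field_simp
  have h2 : (‖vv φ N‖:ℝ)^2 = 1 := by
    have := inner_self_eq_norm_sq (𝕜 := ℂ) (vv φ N)
    rw [hsq] at this
    simp at this
    linarith
  nlinarith [norm_nonneg (vv φ N), sq_nonneg (‖vv φ N‖ - 1), sq_nonneg (‖vv φ N‖ + 1)]

section est
variable {q : ℝ} {f : Bool → (H →L[ℂ] H)}

set_option maxHeartbeats 1000000 in
lemma inner_est (φ : ℝ) (hq : 0 < q) (hq1 : q < 1)
    (hfT : ∀ k, f true (e k) = ((Real.sqrt (1 - q^(4*(k+1))) : ℝ) : ℂ) • e (k+1))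
    (hfF0 : f false (e 0) = 0)
    (hfF : ∀ m, f false (e (m+1)) = ((Real.sqrt (1 - q^(4*(m+1))) : ℝ) : ℂ) • e m)
    (w : List Bool) (N : ℕ) (hN : w.length ≤ N) (hN1 : 1 ≤ N) :
    ‖⟪vv φ N, ((w.map f).prod) (vv φ N)⟫_ℂ - G φ w‖
      ≤ (1 - (1 - q^(4*(N - w.length)))^w.length) + 2*w.length/N := by
  classical
  set L := w.length with hL
  obtain ⟨hd1, hd2⟩ := dd_abs w
  have hq0 : (0:ℝ) ≤ q := le_of_lt hq
  have hq1' : q ≤ 1 := le_of_lt hq1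
  set β : ℝ := (1 - q^(4*(N-L)))^L with hβ
  have hb0 : 0 ≤ 1 - q^(4*(N-L)) := one_sub_nonneg' hq0 hq1' _
  have hβ0 : 0 ≤ β := pow_nonneg hb0 _
  have hβ1 : β ≤ 1 := pow_le_one₀ hb0 (by have := pow_pos hq (4*(N-L)); linarith)
  -- the target index function
  have hmjnn : ∀ j : ℕ, (0:ℤ) ≤ ((N+j : ℕ) : ℤ) + dd w := by
    intro j
    have : (L : ℤ) ≤ (N : ℤ) := by exact_mod_cast hN
    push_cast
    omega
  set mj : ℕ → ℕ := fun j => (((N+j : ℕ) : ℤ) + dd w).toNat with hmjdef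
  have hmj : ∀ j, (mj j : ℤ) = ((N+j:ℕ):ℤ) + dd w := fun j => Int.toNat_of_nonneg (hmjnn j)
  have key : ∀ j : ℕ, ∃ c : ℝ, β ≤ c ∧ c ≤ 1 ∧
      ((w.map f).prod) (e (N+j)) = ((c : ℝ) : ℂ) • e (mj j) := by
    intro j
    obtain ⟨c, h1, h2, h3⟩ := word_act hq hq1 hfT hfF0 hfF w (N+j) (mj j)
      (by omega) (hmj j)
    refine ⟨c, le_trans ?_ h1, h2, h3⟩
    exact pow_le_pow_left₀ hb0 (one_sub_mono hq0 hq1' (by omega)) _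
  choose cf hcβ hc1 hceq using key
  -- expand the inner product
  have hTu : ((w.map f).prod) (uu φ N)
      = ∑ j ∈ Finset.range N, ph φ (N + j) • (((cf j : ℝ) : ℂ) • e (mj j)) := by
    rw [uu, map_sum]
    exact Finset.sum_congr rfl fun j _ => by rw [map_smul, hceq]
  have hinner : ⟪uu φ N, ((w.map f).prod) (uu φ N)⟫_ℂ
      = ∑ j ∈ Finset.range N,
        (if N ≤ mj j ∧ mj j < 2*N then G φ w * ((cf j : ℝ) : ℂ) else 0) := by
    rw [hTu, inner_sum]
    refine Finset.sum_congr rfl fun j hj => ?_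
    rw [inner_smul_right, inner_smul_right, inner_uu_e]
    split_ifs with h
    · have hphG : (starRingEnd ℂ) (ph φ (mj j)) * ph φ (N + j) = G φ w := by
        have h' : ((mj j : ℝ)) = ((N+j:ℕ):ℝ) + (dd w : ℝ) := by exact_mod_cast hmj j
        have hre : ((mj j : ℝ) - ((N+j:ℕ):ℝ)) * φ = (dd w : ℝ) * φ := by rw [h']; ring
        rw [conj_ph_mul, G, hre]
      rw [← hphG]; ring
    · simp
  have hvvu : ⟪vv φ N, ((w.map f).prod) (vv φ N)⟫_ℂ
      = (((N:ℝ)⁻¹ : ℝ) : ℂ) * ⟪uu φ N, ((w.map f).prod) (uu φ N)⟫_ℂ := by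
    rw [vv, map_smul, inner_smul_left, inner_smul_right, Complex.conj_ofReal, ← mul_assoc]
    congr 1
    rw [← Complex.ofReal_mul]
    congr 1
    rw [← Real.sqrt_inv]
    exact Real.mul_self_sqrt (by positivity)
  -- rewrite difference as a single sum
  have hNR : (0:ℝ) < N := by exact_mod_cast hN1
  have hdiff : ⟪vv φ N, ((w.map f).prod) (vv φ N)⟫_ℂ - G φ w
      = (((N:ℝ)⁻¹ : ℝ) : ℂ) * ∑ j ∈ Finset.range N,
        ((if N ≤ mj j ∧ mj j < 2*N then G φ w * ((cf j : ℝ) : ℂ) else 0) - G φ w) := by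
    rw [Finset.sum_sub_distrib, hvvu, hinner, mul_sub, Finset.sum_const, Finset.card_range]
    congr 1
    rw [nsmul_eq_mul, ← mul_assoc, ← Complex.ofReal_natCast, ← Complex.ofReal_mul]
    rw [inv_mul_cancel₀ (ne_of_gt hNR)]
    simp
  -- bound each term
  have hterm : ∀ j ∈ Finset.range N,
      ‖(if N ≤ mj j ∧ mj j < 2*N then G φ w * ((cf j : ℝ) : ℂ) else 0) - G φ w‖
      ≤ (1 - cf j) + (if N ≤ mj j ∧ mj j < 2*N then 0 else 1) := by
    intro j hj
    split_ifs with h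
    · have : G φ w * ((cf j : ℝ) : ℂ) - G φ w = (((cf j - 1 : ℝ)) : ℂ) * G φ w := by
        push_cast; ring
      rw [this, norm_mul, abs_G, mul_one, Complex.norm_real, Real.norm_eq_abs,
        abs_of_nonpos (by have := hc1 j; linarith)]
      have := hcβ j
      linarith
    · rw [zero_sub, norm_neg, abs_G]
      have := hc1 j
      linarith
  -- count the bad indices
  have hbadeq : (∑ j ∈ Finset.range N, (if N ≤ mj j ∧ mj j < 2*N then (0:ℝ) else 1))
      = (((Finset.range N).filter (fun j => ¬(N ≤ mj j ∧ mj j < 2*N))).card : ℝ) := by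
    rw [Finset.card_filter]
    push_cast
    exact Finset.sum_congr rfl fun j _ => by split_ifs <;> simp_all
  have hsub : ((Finset.range N).filter (fun j => ¬(N ≤ mj j ∧ mj j < 2*N)))
      ⊆ Finset.range L ∪ Finset.Ico (N - L) N := by
    intro j hj
    simp only [Finset.mem_filter, Finset.mem_range] at hj
    obtain ⟨hjN, hbadj⟩ := hj
    rw [not_and_or, not_le, not_lt] at hbadj
    have h1 := hmj j
    have hLw : (L : ℤ) = (w.length : ℤ) := by exact_mod_cast congrArg Nat.cast hL
    simp only [Finset.mem_union, Finset.mem_range, Finset.mem_Ico]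
    omega
  have hcard : (((Finset.range N).filter (fun j => ¬(N ≤ mj j ∧ mj j < 2*N))).card) ≤ 2*L := by
    refine le_trans (Finset.card_le_card hsub) (le_trans (Finset.card_union_le _ _) ?_)
    rw [Finset.card_range, Nat.card_Ico]
    omega
  have hbad : (∑ j ∈ Finset.range N, (if N ≤ mj j ∧ mj j < 2*N then (0:ℝ) else 1))
      ≤ 2*L := by
    rw [hbadeq]; exact_mod_cast hcard
  have hsum1 : ∑ j ∈ Finset.range N, (1 - cf j) ≤ (N:ℝ) * (1 - β) := by
    calc ∑ j ∈ Finset.range N, (1 - cf j) ≤ ∑ j ∈ Finset.range N, (1 - β) :=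
          Finset.sum_le_sum fun j _ => by have := hcβ j; linarith
      _ = (N:ℝ) * (1-β) := by
          rw [Finset.sum_const, Finset.card_range, nsmul_eq_mul]
  calc ‖⟪vv φ N, ((w.map f).prod) (vv φ N)⟫_ℂ - G φ w‖
      = (N:ℝ)⁻¹ * ‖∑ j ∈ Finset.range N,
        ((if N ≤ mj j ∧ mj j < 2*N then G φ w * ((cf j : ℝ) : ℂ) else 0) - G φ w)‖ := by
        rw [hdiff, norm_mul, Complex.norm_real, Real.norm_eq_abs, _root_.abs_of_nonneg (inv_nonneg.2 (le_of_lt hNR))]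
    _ ≤ (N:ℝ)⁻¹ * ∑ j ∈ Finset.range N,
        ‖(if N ≤ mj j ∧ mj j < 2*N then G φ w * ((cf j : ℝ) : ℂ) else 0) - G φ w‖ :=
        mul_le_mul_of_nonneg_left (norm_sum_le _ _) (by positivity)
    _ ≤ (N:ℝ)⁻¹ * ∑ j ∈ Finset.range N,
        ((1 - cf j) + (if N ≤ mj j ∧ mj j < 2*N then 0 else 1)) :=
        mul_le_mul_of_nonneg_left (Finset.sum_le_sum hterm) (by positivity)
    _ = (N:ℝ)⁻¹ * ((∑ j ∈ Finset.range N, (1 - cf j))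
        + ∑ j ∈ Finset.range N, (if N ≤ mj j ∧ mj j < 2*N then (0:ℝ) else 1)) := by
        rw [Finset.sum_add_distrib]
    _ ≤ (N:ℝ)⁻¹ * ((N:ℝ) * (1 - β) + 2*L) :=
        mul_le_mul_of_nonneg_left (add_le_add hsum1 hbad) (by positivity)
    _ = (1 - β) + 2*L/N := by field_simp

end est

open Filter Topology

section limit
variable {q : ℝ} {f : Bool → (H →L[ℂ] H)}

lemma bound_tendsto (hq : 0 < q) (hq1 : q < 1) (L : ℕ) :
    Tendsto (fun N : ℕ => (1 - (1 - q^(4*(N - L)))^L) + 2*L/N) atTop (𝓝 0) := by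
  have hq0 : (0:ℝ) ≤ q := le_of_lt hq
  have h1 : Tendsto (fun N : ℕ => q^(4*(N - L))) atTop (𝓝 0) := by
    apply (tendsto_pow_atTop_nhds_zero_of_lt_one hq0 hq1).comp
    apply Filter.tendsto_atTop_atTop.2
    intro b
    exact ⟨b + L, fun a ha => by omega⟩
  have h2 : Tendsto (fun N : ℕ => (1 - (1 - q^(4*(N - L)))^L)) atTop (𝓝 0) := by
    have := ((tendsto_const_nhds (x := (1:ℝ))).sub h1).pow L
    have := (tendsto_const_nhds (x := (1:ℝ))).sub this
    simpa using this
  have h3 : Tendsto (fun N : ℕ => 2*(L:ℝ)/N) atTop (𝓝 0) :=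
    tendsto_const_div_atTop_nhds_zero_nat _
  simpa using h2.add h3

lemma word_tendsto (φ : ℝ) (hq : 0 < q) (hq1 : q < 1)
    (hfT : ∀ k, f true (e k) = ((Real.sqrt (1 - q^(4*(k+1))) : ℝ) : ℂ) • e (k+1))
    (hfF0 : f false (e 0) = 0)
    (hfF : ∀ m, f false (e (m+1)) = ((Real.sqrt (1 - q^(4*(m+1))) : ℝ) : ℂ) • e m)
    (w : List Bool) :
    Tendsto (fun N : ℕ => ⟪vv φ N, ((w.map f).prod) (vv φ N)⟫_ℂ) atTop (𝓝 (G φ w)) := by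
  rw [tendsto_iff_norm_sub_tendsto_zero]
  apply squeeze_zero' (Filter.Eventually.of_forall fun N => norm_nonneg _)
  · filter_upwards [eventually_ge_atTop (max w.length 1)] with N hN
    have h1 : w.length ≤ N := le_trans (le_max_left _ _) hN
    have h2 : 1 ≤ N := le_trans (le_max_right _ _) hN
    exact inner_est φ hq hq1 hfT hfF0 hfF w N h1 h2
  · exact bound_tendsto hq hq1 w.length

end limit

lemma G_prod (φ : ℝ) (g : Bool → ℂ)
    (hg : g true = Complex.exp (φ * Complex.I))
    (hg' : g false = Complex.exp (-(φ * Complex.I))) :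
    ∀ w : List Bool, (w.map g).prod = G φ w
  | [] => by simp [G, dd]
  | b :: t => by
    have ih := G_prod φ g hg hg' t
    simp only [List.map_cons, List.prod_cons, ih, G, dd]
    cases b
    · rw [hg', ← Complex.exp_add]
      congr 1
      norm_num
      push_cast
      ring
    · rw [hg, ← Complex.exp_add]
      congr 1
      norm_num
      push_cast
      ring

lemma lift_word {A : Type*} [Semiring A] [Algebra ℂ A] (f : Bool → A) (w : List Bool) :
    FreeAlgebra.lift ℂ f ((w.map (FreeAlgebra.ι ℂ)).prod) = (w.map f).prod := by
  rw [map_list_prod, List.map_map]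
  congr 1
  apply List.map_congr_left
  intro b _
  simp [Function.comp, FreeAlgebra.lift_ι_apply]

lemma list_range_ι (l : List (FreeAlgebra ℂ Bool))
    (hl : ∀ y ∈ l, y ∈ Set.range (FreeAlgebra.ι ℂ)) :
    ∃ w : List Bool, l = w.map (FreeAlgebra.ι ℂ) := by
  induction l with
  | nil => exact ⟨[], rfl⟩
  | cons a t ih =>
    obtain ⟨w, hw⟩ := ih fun y hy => hl y (List.mem_cons_of_mem _ hy)
    obtain ⟨b, hb⟩ := hl a List.mem_cons_self
    exact ⟨b :: w, by rw [List.map_cons, hb, hw]⟩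

/-- Every *-polynomial p in z (an element of the free algebra on the two symbols z, z*)
satisfies |ρ_φ(p)| ≤ ‖ρ_F(p)‖, where ρ_F(z) = C₄S and ρ_φ(z) = e^{iφ}. -/
theorem stmt16 (q : ℝ) (hq : 0 < q) (hq1 : q < 1) (φ : ℝ)
    (S C4 : H →L[ℂ] H)
    (hS : ∀ k, S (e k) = e (k + 1))
    (hC4 : ∀ k, C4 (e k) = ((Real.sqrt (1 - q ^ (4 * k)) : ℝ) : ℂ) • e k)
    (f : Bool → (H →L[ℂ] H))
    (hf : f true = C4 ∘L S) (hf' : f false = adjoint (C4 ∘L S))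
    (g : Bool → ℂ)
    (hg : g true = Complex.exp (φ * Complex.I))
    (hg' : g false = Complex.exp (-(φ * Complex.I))) :
    ∀ p : FreeAlgebra ℂ Bool,
      ‖FreeAlgebra.lift ℂ g p‖ ≤ ‖FreeAlgebra.lift ℂ f p‖ := by
  intro p
  have hfT : ∀ k, f true (e k) = ((Real.sqrt (1 - q^(4*(k+1))) : ℝ) : ℂ) • e (k+1) := by
    intro k; rw [hf]; exact CS_e hS hC4 k
  have hfF0 : f false (e 0) = 0 := by rw [hf']; exact adj_e_zero hS hC4
  have hfF : ∀ m, f false (e (m+1)) = ((Real.sqrt (1 - q^(4*(m+1))) : ℝ) : ℂ) • e m := by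
    intro m; rw [hf']; exact adj_e_succ hS hC4 m
  let D : Submodule ℂ (FreeAlgebra ℂ Bool) :=
  { carrier := {x | Tendsto (fun N : ℕ => ⟪vv φ N, (FreeAlgebra.lift ℂ f x) (vv φ N)⟫_ℂ)
      atTop (𝓝 (FreeAlgebra.lift ℂ g x))}
    add_mem' := by
      intro a b ha hb
      simp only [Set.mem_setOf_eq, map_add, ContinuousLinearMap.add_apply,
        inner_add_right] at *
      exact ha.add hb
    zero_mem' := by
      simp only [Set.mem_setOf_eq, map_zero, ContinuousLinearMap.zero_apply,
        inner_zero_right]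
      exact tendsto_const_nhds
    smul_mem' := by
      intro c a ha
      simp only [Set.mem_setOf_eq, map_smul, ContinuousLinearMap.smul_apply,
        inner_smul_right, smul_eq_mul] at *
      exact ha.const_mul c }
  have hword : ∀ w : List Bool, ((w.map (FreeAlgebra.ι ℂ)).prod) ∈ D := by
    intro w
    have e1 : FreeAlgebra.lift ℂ f ((w.map (FreeAlgebra.ι ℂ)).prod) = (w.map f).prod :=
      lift_word f w
    have e2 : FreeAlgebra.lift ℂ g ((w.map (FreeAlgebra.ι ℂ)).prod) = G φ w := by
      rw [lift_word g w, G_prod φ g hg hg' w]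
    show Tendsto _ atTop _
    rw [e2]
    simp only [e1]
    exact word_tendsto φ hq hq1 hfT hfF0 hfF w
  have hDtop : p ∈ D := by
    have h0 : (⊤ : Submodule ℂ (FreeAlgebra ℂ Bool))
        = Submodule.span ℂ ((Submonoid.closure (Set.range (FreeAlgebra.ι ℂ : Bool → FreeAlgebra ℂ Bool)))
          : Set (FreeAlgebra ℂ Bool)) := by
      rw [← Algebra.adjoin_eq_span, FreeAlgebra.adjoin_range_ι, Algebra.top_toSubmodule]
    have hsub : ((Submonoid.closure (Set.range (FreeAlgebra.ι ℂ : Bool → FreeAlgebra ℂ Bool)))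
        : Set (FreeAlgebra ℂ Bool)) ⊆ (D : Set (FreeAlgebra ℂ Bool)) := by
      intro y hy
      obtain ⟨l, hl, rfl⟩ := Submonoid.exists_list_of_mem_closure hy
      obtain ⟨w, rfl⟩ := list_range_ι l hl
      exact hword w
    have hle : Submodule.span ℂ ((Submonoid.closure (Set.range (FreeAlgebra.ι ℂ : Bool → FreeAlgebra ℂ Bool)))
        : Set (FreeAlgebra ℂ Bool)) ≤ D := Submodule.span_le.2 hsub
    exact hle (h0 ▸ Submodule.mem_top)
  have ht : Tendsto (fun N : ℕ => ⟪vv φ N, (FreeAlgebra.lift ℂ f p) (vv φ N)⟫_ℂ)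
      atTop (𝓝 (FreeAlgebra.lift ℂ g p)) := hDtop
  refine le_of_tendsto ht.norm ?_
  filter_upwards [eventually_ge_atTop 1] with N hN
  have h1 : ‖vv φ N‖ = 1 := norm_vv φ N hN
  have h2 : ‖⟪vv φ N, (FreeAlgebra.lift ℂ f p) (vv φ N)⟫_ℂ‖
      ≤ ‖vv φ N‖ * ‖(FreeAlgebra.lift ℂ f p) (vv φ N)‖ := norm_inner_le_norm _ _
  have h3 : ‖(FreeAlgebra.lift ℂ f p) (vv φ N)‖
      ≤ ‖FreeAlgebra.lift ℂ f p‖ * ‖vv φ N‖ := le_opNorm _ _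
  rw [h1, one_mul] at h2
  rw [h1, mul_one] at h3
  exact le_trans h2 h3
end
end
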